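/- arXiv:2312.04354 — 2 statements merged into one kernel-verified Lean document; each statement's English description precedes it below -/
import Mathlib

section
/- Let ε and A be real numbers with 0 < ε ≤ 1 and A ≥ e^{2ε} · ε^{−ε}, and let x be a real number with x > 1 and x ≤ A · (log x)^ε. Then x < A · (2 log A)^ε. -/
theorem log_power_bound (ε A x : ℝ) (hε0 : 0 < ε) (hε1 : ε ≤ 1)
    (hA : A ≥ Real.exp (2 * ε) * ε ^ (-ε)) (hx1 : x > 1)
    (hx : x ≤ A * Real.log x ^ ε) :
    x < A * (2 * Real.log A) ^ ε := by
  have hεε : (1:ℝ) ≤ ε ^ (-ε) := by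
    rw [Real.rpow_neg hε0.le]
    have h1 : ε ^ ε ≤ 1 := Real.rpow_le_one hε0.le hε1 hε0.le
    have h2 : 0 < ε ^ ε := Real.rpow_pos_of_pos hε0 ε
    exact (one_le_inv₀ h2).mpr h1
  have hexp : (1:ℝ) < Real.exp (2 * ε) := by
    rw [Real.one_lt_exp_iff]; linarith
  have hA1 : 1 < A := by nlinarith [Real.exp_pos (2 * ε)]
  have hApos : 0 < A := by linarith
  have hB : 0 < Real.log A := Real.log_pos hA1
  have hL : 0 < Real.log x := Real.log_pos hx1
  have hx0 : (0:ℝ) < x := by linarith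
  have hrpos : 0 < Real.log x ^ ε := Real.rpow_pos_of_pos hL ε
  have hlog : Real.log x ≤ Real.log A + ε * Real.log (Real.log x) := by
    have h := Real.log_le_log hx0 hx
    rwa [Real.log_mul hApos.ne' hrpos.ne', Real.log_rpow hL] at h
  have key : Real.log (Real.log x) ≤ Real.log x / Real.exp 1 := by
    have h := Real.add_one_le_exp (Real.log (Real.log x) - 1)
    rw [Real.exp_sub, Real.exp_log hL] at h
    have he : 0 < Real.exp 1 := Real.exp_pos 1
    rw [ge_iff_le, ← sub_le_iff_le_add] at *
    linarith
  have he2 : (2:ℝ) < Real.exp 1 := by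
    have := Real.exp_one_gt_d9; linarith
  have hlt : Real.log x < 2 * Real.log A := by
    have h1 : ε * Real.log (Real.log x) ≤ ε * (Real.log x / Real.exp 1) :=
      mul_le_mul_of_nonneg_left key hε0.le
    have h2 : ε * (Real.log x / Real.exp 1) < Real.log x / 2 := by
      have hepos : 0 < Real.exp 1 := Real.exp_pos 1
      rw [mul_div_assoc', div_lt_div_iff₀ hepos (by norm_num : (0:ℝ) < 2)]
      nlinarith
    linarith
  calc x ≤ A * Real.log x ^ ε := hx
    _ < A * (2 * Real.log A) ^ ε := by
        exact mul_lt_mul_of_pos_left (Real.rpow_lt_rpow hL.le hlt hε0) hApos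
end

section
/- Let n ≥ 1 be an integer, z a complex number and r a real number with 0 < r < 1 and |z| ≤ r. Then | log |Φ_n(z)| | ≤ (|log(1−r)| / (1−r)) · (|z| / r), where Φ_n denotes the n-th cyclotomic polynomial evaluated at z and the outer log is the real natural logarithm of the complex absolute value |Φ_n(z)|. -/
open Finset Polynomial ArithmeticFunction
open scoped ArithmeticFunction.Moebius

/-- Convexity bound: `-log (1 - x) ≤ x / r * (-log (1 - r))` for `0 ≤ x ≤ r < 1`. -/
private lemma neg_log_one_sub_le_aux {x r : ℝ} (hx : 0 ≤ x) (hxr : x ≤ r) (hr0 : 0 < r)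
    (hr1 : r < 1) : -Real.log (1 - x) ≤ x / r * (-Real.log (1 - r)) := by
  have hcc : ConcaveOn ℝ (Set.Ioi 0) Real.log := strictConcaveOn_log_Ioi.concaveOn
  have h1r : (0:ℝ) < 1 - r := by linarith
  have h1x : (0:ℝ) < 1 - x := by linarith
  have ha : 0 ≤ x / r := div_nonneg hx hr0.le
  have hb : 0 ≤ 1 - x / r := by
    have : x / r ≤ 1 := (div_le_one hr0).2 hxr
    linarith
  have hsum : x / r + (1 - x / r) = 1 := by ring
  have key := hcc.2 (Set.mem_Ioi.2 h1r) (Set.mem_Ioi.2 one_pos) ha hb hsum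
  have hxx : (x / r) • (1 - r) + (1 - x / r) • (1:ℝ) = 1 - x := by
    simp only [smul_eq_mul]
    field_simp
    ring
  rw [hxx, Real.log_one, smul_eq_mul, smul_eq_mul, mul_zero, add_zero] at key
  nlinarith [key]


/-- `| log |w - 1| | ≤ -log (1 - t)` when `|w| ≤ t < 1`. -/
private lemma abs_log_abs_sub_one_le {w : ℂ} {t : ℝ} (hw : ‖w‖ ≤ t) (ht : t < 1) :
    |Real.log ‖w - 1‖| ≤ -Real.log (1 - t) := by
  have ht0 : 0 ≤ t := le_trans (norm_nonneg w) hw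
  have h1t : (0:ℝ) < 1 - t := by linarith
  set a := ‖w - 1‖ with ha
  have hlow : 1 - t ≤ a := by
    have h1 : (1:ℝ) - ‖w‖ ≤ ‖w - 1‖ := by
      have := norm_sub_norm_le (1 : ℂ) w
      simpa [norm_sub_rev] using this
    linarith
  have hhigh : a ≤ 1 + t := by
    have h2 : ‖w - 1‖ ≤ ‖w‖ + 1 := by
      have := norm_sub_le w (1 : ℂ)
      simpa using this
    rw [ha]
    linarith
  have ha0 : 0 < a := lt_of_lt_of_le h1t hlow
  rcases le_or_gt a 1 with hle | hgt
  · have hlog : Real.log a ≤ 0 := Real.log_nonpos ha0.le hle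
    rw [abs_of_nonpos hlog, neg_le_neg_iff]
    exact Real.log_le_log h1t hlow
  · have hlog : 0 ≤ Real.log a := Real.log_nonneg hgt.le
    rw [abs_of_nonneg hlog]
    have h1 : Real.log a ≤ Real.log (1 + t) := Real.log_le_log ha0 hhigh
    have h2 : Real.log (1 + t) + Real.log (1 - t) ≤ 0 := by
      rw [← Real.log_mul (by linarith) (by linarith)]
      apply Real.log_nonpos <;> nlinarith
    linarith

theorem abs_log_abs_cyclotomic_le (n : ℕ) (hn : 1 ≤ n) (z : ℂ) (r : ℝ)
    (hr0 : 0 < r) (hr1 : r < 1) (hz : ‖z‖ ≤ r) :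
    |Real.log ‖(Polynomial.cyclotomic n ℂ).eval z‖| ≤
      |Real.log (1 - r)| / (1 - r) * (‖z‖ / r) := by
  set s := ‖z‖ with hs
  have hs0 : 0 ≤ s := norm_nonneg z
  have hs1 : s < 1 := lt_of_le_of_lt hz hr1
  have h1s : (0:ℝ) < 1 - s := by linarith
  have h1r : (0:ℝ) < 1 - r := by linarith
  set f : ℕ → ℝ := fun i => Real.log ‖(cyclotomic i ℂ).eval z‖ with hf
  set g : ℕ → ℝ := fun m => Real.log ‖z ^ m - 1‖ with hg
  -- z^m - 1 ≠ 0 for m > 0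
  have hpow_ne : ∀ m : ℕ, 0 < m → (z ^ m - 1 : ℂ) ≠ 0 := by
    intro m hm h0
    have hlt : ‖z ^ m‖ < 1 := by
      rw [norm_pow]
      exact pow_lt_one₀ hs0 hs1 hm.ne'
    rw [sub_eq_zero] at h0
    rw [h0] at hlt
    simp at hlt
  -- product of cyclotomic evals over divisors
  have hprodeval : ∀ m : ℕ, 0 < m →
      (∏ i ∈ m.divisors, (cyclotomic i ℂ).eval z) = z ^ m - 1 := by
    intro m hm
    calc (∏ i ∈ m.divisors, (cyclotomic i ℂ).eval z)
        = (∏ i ∈ m.divisors, cyclotomic i ℂ).eval z := by rw [eval_prod]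
      _ = ((X : ℂ[X]) ^ m - 1).eval z := by rw [prod_cyclotomic_eq_X_pow_sub_one hm ℂ]
      _ = z ^ m - 1 := by simp
  -- each cyclotomic eval is nonzero
  have hcyc_ne : ∀ m : ℕ, 0 < m → ∀ i ∈ m.divisors, (cyclotomic i ℂ).eval z ≠ 0 := by
    intro m hm
    have hne : (∏ i ∈ m.divisors, (cyclotomic i ℂ).eval z) ≠ 0 := by
      rw [hprodeval m hm]; exact hpow_ne m hm
    exact fun i hi => Finset.prod_ne_zero_iff.mp hne i hi
  -- the divisor-sum identity
  have hsum : ∀ m : ℕ, 0 < m → ∑ i ∈ m.divisors, f i = g m := by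
    intro m hm
    have habs : (∏ i ∈ m.divisors, ‖(cyclotomic i ℂ).eval z‖)
        = ‖z ^ m - 1‖ := by
      rw [← hprodeval m hm, Complex.norm_prod]
    simp only [hf, hg]
    rw [← habs, Real.log_prod (fun i hi => by
      simpa using hcyc_ne m hm i hi)]
  -- Möbius inversion
  have hmob := (ArithmeticFunction.sum_eq_iff_sum_smul_moebius_eq.mp hsum) n hn
  have hC : 0 ≤ -Real.log (1 - r) := by
    have := Real.log_nonpos h1r.le (by linarith)
    linarith
  -- bound |f n| by the sum of |g e| over divisors
  have hbound : |f n| ≤ ∑ e ∈ n.divisors, |g e| := by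
    rw [← hmob]
    calc |∑ x ∈ n.divisorsAntidiagonal, μ x.fst • g x.snd|
        ≤ ∑ x ∈ n.divisorsAntidiagonal, |μ x.fst • g x.snd| := Finset.abs_sum_le_sum_abs _ _
      _ ≤ ∑ x ∈ n.divisorsAntidiagonal, |g x.snd| := by
          apply Finset.sum_le_sum
          intro x _
          rw [zsmul_eq_mul, abs_mul]
          have h1 : |(μ x.fst : ℝ)| ≤ 1 := by
            exact_mod_cast ArithmeticFunction.abs_moebius_le_one (n := x.fst)
          calc |(μ x.fst : ℝ)| * |g x.snd| ≤ 1 * |g x.snd| :=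
                mul_le_mul_of_nonneg_right h1 (abs_nonneg _)
            _ = |g x.snd| := one_mul _
      _ = ∑ e ∈ n.divisors, |g e| :=
          Nat.sum_divisorsAntidiagonal' (f := fun _ y => |g y|)
  -- bound each |g e|
  have hge : ∀ e ∈ n.divisors, |g e| ≤ s ^ e * (-Real.log (1 - r) / r) := by
    intro e he
    obtain ⟨hdvd, hn0⟩ := Nat.mem_divisors.mp he
    have he1 : 1 ≤ e := Nat.pos_of_dvd_of_pos hdvd (Nat.pos_of_ne_zero hn0)
    have hse : s ^ e ≤ s := by
      calc s ^ e ≤ s ^ 1 := pow_le_pow_of_le_one hs0 hs1.le he1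
        _ = s := pow_one s
    have hser : s ^ e ≤ r := le_trans hse hz
    have h1 : |g e| ≤ -Real.log (1 - s ^ e) := by
      have := abs_log_abs_sub_one_le (w := z ^ e) (t := s ^ e)
        (by rw [norm_pow]) (lt_of_le_of_lt hser hr1)
      simpa [hg] using this
    have h2 : -Real.log (1 - s ^ e) ≤ s ^ e / r * (-Real.log (1 - r)) :=
      neg_log_one_sub_le_aux (pow_nonneg hs0 e) hser hr0 hr1
    calc |g e| ≤ s ^ e / r * (-Real.log (1 - r)) := le_trans h1 h2
      _ = s ^ e * (-Real.log (1 - r) / r) := by ring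
  -- geometric sum bound
  have hgeo : ∑ e ∈ n.divisors, s ^ e ≤ s / (1 - r) := by
    have hsub : n.divisors ⊆ Finset.Icc 1 n := by
      intro e he
      obtain ⟨hdvd, hn0⟩ := Nat.mem_divisors.mp he
      exact Finset.mem_Icc.mpr ⟨Nat.pos_of_dvd_of_pos hdvd (Nat.pos_of_ne_zero hn0),
        Nat.le_of_dvd (Nat.pos_of_ne_zero hn0) hdvd⟩
    have h1 : ∑ e ∈ n.divisors, s ^ e ≤ ∑ e ∈ Finset.Icc 1 n, s ^ e :=
      Finset.sum_le_sum_of_subset_of_nonneg hsub (fun i _ _ => pow_nonneg hs0 i)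
    have h2 : ∑ e ∈ Finset.Icc 1 n, s ^ e = s * ∑ i ∈ Finset.range n, s ^ i := by
      rw [Finset.mul_sum, ← Finset.Ico_add_one_right_eq_Icc, Finset.sum_Ico_eq_sum_range]
      exact Finset.sum_congr rfl fun i _ => by ring
    have h3 : ∑ i ∈ Finset.range n, s ^ i ≤ 1 / (1 - s) := by
      rcases eq_or_ne s 1 with h | h
      · exact absurd h (by linarith)
      rw [geom_sum_eq h]
      have heq : (s ^ n - 1) / (s - 1) = (1 - s ^ n) / (1 - s) := by
        rw [← neg_sub (1:ℝ) (s ^ n), ← neg_sub (1:ℝ) s, neg_div_neg_eq]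
      rw [heq]
      gcongr
      · nlinarith [pow_nonneg hs0 n]
    have h4 : s * ∑ i ∈ Finset.range n, s ^ i ≤ s * (1 / (1 - s)) :=
      mul_le_mul_of_nonneg_left h3 hs0
    have h5 : s * (1 / (1 - s)) = s / (1 - s) := by ring
    have h6 : s / (1 - s) ≤ s / (1 - r) :=
      div_le_div_of_nonneg_left hs0 h1r (by linarith)
    linarith [h1, h2 ▸ h4]
  -- put it together
  have hfinal : |f n| ≤ s / (1 - r) * (-Real.log (1 - r) / r) := by
    calc |f n| ≤ ∑ e ∈ n.divisors, |g e| := hbound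
      _ ≤ ∑ e ∈ n.divisors, s ^ e * (-Real.log (1 - r) / r) := Finset.sum_le_sum hge
      _ = (∑ e ∈ n.divisors, s ^ e) * (-Real.log (1 - r) / r) := by rw [Finset.sum_mul]
      _ ≤ s / (1 - r) * (-Real.log (1 - r) / r) :=
          mul_le_mul_of_nonneg_right hgeo (div_nonneg hC hr0.le)
  have habslog : |Real.log (1 - r)| = -Real.log (1 - r) :=
    abs_of_nonpos (Real.log_nonpos h1r.le (by linarith))
  calc |Real.log ‖(cyclotomic n ℂ).eval z‖| = |f n| := rfl
    _ ≤ s / (1 - r) * (-Real.log (1 - r) / r) := hfinal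
    _ = |Real.log (1 - r)| / (1 - r) * (s / r) := by rw [habslog]; ring
end
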